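/- arXiv:2603.25983 — 2 statements merged into one kernel-verified Lean document; each statement's English description precedes it below -/
import Mathlib

section
/- Let β ∈ ℝ^{m_k+1} minimize ‖(A q(x_k) − b) + Σ_{i=0}^{m_k} β_i ((A q(x_k) − b) − (A x_{k−i} − b))‖ over all β ∈ ℝ^{m_k+1} (the NGMRES least-squares problem), define x_{k+1} = q(x_k) + Σ_{i=0}^{m_k} β_i (q(x_k) − x_{k−i}) and r̄_{k+1} = A x_{k+1} − b. Then ⟨r̄_{k+1}, A P r̄_k⟩ = 0, and ⟨r̄_{k+1}, r̄_{k−j} − r̄_{k−i}⟩ = 0 for all indices 0 ≤ i, j ≤ m_k. -/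
open scoped RealInnerProductSpace

/-- Matrix-vector multiplication on Euclidean space. -/
noncomputable def mulV {n : ℕ} (M : Matrix (Fin n) (Fin n) ℝ)
    (v : EuclideanSpace ℝ (Fin n)) : EuclideanSpace ℝ (Fin n) :=
  Matrix.toEuclideanLin M v

lemma mulV_mul {n : ℕ} (A B : Matrix (Fin n) (Fin n) ℝ) (v : EuclideanSpace ℝ (Fin n)) :
    mulV (A * B) v = mulV A (mulV B v) := by
  simp [mulV, Matrix.toEuclideanLin_apply, Matrix.mulVec_mulVec]

lemma perp_of_min {E : Type*} [NormedAddCommGroup E] [InnerProductSpace ℝ E]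
    (w v : E) (h : ∀ t : ℝ, ‖w‖ ≤ ‖w + t • v‖) : ⟪w, v⟫ = 0 := by
  by_contra hne
  have hv : v ≠ 0 := by rintro rfl; simp at hne
  have hvpos : (0:ℝ) < ‖v‖ := norm_pos_iff.mpr hv
  have hv2 : (0:ℝ) < ‖v‖ ^ 2 := by positivity
  set t : ℝ := -⟪w, v⟫ / ‖v‖ ^ 2 with ht
  have hle : ‖w‖ ^ 2 ≤ ‖w + t • v‖ ^ 2 := by
    have := h t
    nlinarith [norm_nonneg w, norm_nonneg (w + t • v)]
  have h2 : ‖w + t • v‖ ^ 2 = ‖w‖ ^ 2 + 2 * t * ⟪w, v⟫ + t ^ 2 * ‖v‖ ^ 2 := by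
    rw [norm_add_sq_real, real_inner_smul_right, norm_smul]
    simp [mul_pow]
    ring
  rw [h2, ht] at hle
  have hpos : 0 < ⟪w, v⟫ ^ 2 := by
    rcases lt_or_gt_of_ne hne with h' | h' <;> nlinarith
  rw [div_pow] at hle
  field_simp at hle
  nlinarith [mul_pos hpos (mul_pos hv2 hv2), mul_pos hpos hv2]

/-- orthogonality properties of the NGMRES residual. -/
theorem stmt_5 {n : ℕ} (A P : Matrix (Fin n) (Fin n) ℝ)
    (hA : IsUnit A.det) (hP : IsUnit P.det)
    (b : EuclideanSpace ℝ (Fin n))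
    (q rb : EuclideanSpace ℝ (Fin n) → EuclideanSpace ℝ (Fin n))
    (hq : ∀ y, q y = y + mulV P (b - mulV A y))
    (hrb : ∀ y, rb y = mulV A y - b)
    (k m : ℕ) (hm : m ≤ k)
    (x : ℕ → EuclideanSpace ℝ (Fin n))
    (β : ℕ → ℝ)
    (hopt : ∀ c : ℕ → ℝ,
      ‖(mulV A (q (x k)) - b) + ∑ i ∈ Finset.range (m + 1),
          β i • ((mulV A (q (x k)) - b) - (mulV A (x (k - i)) - b))‖ ≤
      ‖(mulV A (q (x k)) - b) + ∑ i ∈ Finset.range (m + 1),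
          c i • ((mulV A (q (x k)) - b) - (mulV A (x (k - i)) - b))‖)
    (xk1 rk1 : EuclideanSpace ℝ (Fin n))
    (hx : xk1 = q (x k) + ∑ i ∈ Finset.range (m + 1), β i • (q (x k) - x (k - i)))
    (hrk1 : rk1 = mulV A xk1 - b) :
    ⟪rk1, mulV (A * P) (rb (x k))⟫ = 0 ∧
    ∀ i j, i ≤ m → j ≤ m → ⟪rk1, rb (x (k - j)) - rb (x (k - i))⟫ = 0 := by
  set r : EuclideanSpace ℝ (Fin n) := mulV A (q (x k)) - b with hr
  set v : ℕ → EuclideanSpace ℝ (Fin n) :=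
    fun i => r - (mulV A (x (k - i)) - b) with hv
  set w : EuclideanSpace ℝ (Fin n) := r + ∑ i ∈ Finset.range (m + 1), β i • v i with hw
  have hAlin : ∀ y z : EuclideanSpace ℝ (Fin n), mulV A (y + z) = mulV A y + mulV A z := by
    intro y z; simp [mulV]
  have hrk1w : rk1 = w := by
    rw [hrk1, hx, hw, hr, hv]
    have : mulV A (q (x k) + ∑ i ∈ Finset.range (m + 1), β i • (q (x k) - x (k - i)))
        = mulV A (q (x k)) + ∑ i ∈ Finset.range (m + 1), β i • (mulV A (q (x k)) - mulV A (x (k - i))) := by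
      simp [mulV, map_sum]
    rw [this]
    have hsum : ∀ i, β i • (mulV A (q (x k)) - mulV A (x (k - i)))
        = β i • ((mulV A (q (x k)) - b) - (mulV A (x (k - i)) - b)) := by
      intro i; congr 1; abel
    rw [Finset.sum_congr rfl fun i _ => hsum i]
    abel
  have hperp : ∀ j ≤ m, ⟪w, v j⟫ = 0 := by
    intro j hj
    apply perp_of_min
    intro t
    have hopt' := hopt (fun i => β i + if i = j then t else 0)
    have hsum : ∑ i ∈ Finset.range (m + 1), (β i + if i = j then t else 0) • v i
        = (∑ i ∈ Finset.range (m + 1), β i • v i) + t • v j := by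
      simp only [add_smul, Finset.sum_add_distrib, ite_smul, zero_smul]
      rw [Finset.sum_ite_eq' (Finset.range (m + 1))]
      simp [Nat.lt_succ_of_le hj]
    change ‖w‖ ≤ ‖r + ∑ i ∈ Finset.range (m + 1), (β i + if i = j then t else 0) • v i‖ at hopt'
    rw [hsum] at hopt'
    calc ‖w‖ ≤ ‖r + ((∑ i ∈ Finset.range (m + 1), β i • v i) + t • v j)‖ := hopt'
      _ = ‖w + t • v j‖ := by rw [hw]; congr 1; abel
  constructor
  · have h0 : mulV (A * P) (rb (x k)) = -(v 0) := by
      rw [mulV_mul, hrb, hv, hr, hq]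
      have : mulV A (x k + mulV P (b - mulV A (x k)))
          = mulV A (x k) + mulV A (mulV P (b - mulV A (x k))) := hAlin _ _
      rw [this]
      have : mulV P (b - mulV A (x k)) = -(mulV P (mulV A (x k) - b)) := by
        have : b - mulV A (x k) = -(mulV A (x k) - b) := by abel
        rw [this]; simp [mulV]
      rw [this]
      have : mulV A (-(mulV P (mulV A (x k) - b))) = -(mulV A (mulV P (mulV A (x k) - b))) := by
        simp [mulV]
      rw [this]
      simp only [Nat.sub_zero]
      abel
    rw [h0, hrk1w, inner_neg_right, hperp 0 (Nat.zero_le m), neg_zero]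
  · intro i j hi hj
    have hdiff : rb (x (k - j)) - rb (x (k - i)) = v i - v j := by
      rw [hrb, hrb, hv]
      show mulV A (x (k - j)) - b - (mulV A (x (k - i)) - b) = (r - (mulV A (x (k - i)) - b)) - (r - (mulV A (x (k - j)) - b))
      abel
    rw [hdiff, hrk1w, inner_sub_right, hperp i hi, hperp j hj, sub_zero]
end

section
/- Assume the matrix AP satisfies (AP)ᵀ = AP, or AP = τ I + S for some τ ∈ ℝ and some matrix S with Sᵀ = −S. Fix a depth m ∈ ℤ^+ and x_0 ∈ ℝ^n, and let (x_k) be the NGMRES(m) sequence: for each k, x_{k+1} = q(x_k) + Σ_{i=0}^{m_k} β_i^{(k)} (q(x_k) − x_{k−i}) with m_k = min{k, m}, where β^{(k)} ∈ ℝ^{m_k+1} minimizes ‖A x_{k+1} − b‖ over all coefficient vectors. Let (x_k^{Gr}) be a right-preconditioned GMRES sequence with x_0^{Gr} = x_0: for each k, x_k^{Gr} ∈ x_0 + P · K_k(AP, r̄_0) and ‖A x_k^{Gr} − b‖ ≤ ‖A y − b‖ for every y ∈ x_0 + P · K_k(AP, r̄_0), where r̄_0 = A x_0 − b; write r̄_k^{Gr}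 = A x_k^{Gr} − b. Assume for some k* ∈ ℤ^+ that r̄_{k*−1}^{Gr} ≠ 0 and ‖r̄_k^{Gr}‖ < ‖r̄_{k−1}^{Gr}‖ for all integers k with 0 < k < k*. Then x_k = x_k^{Gr} for all 0 ≤ k ≤ k*. -/
open scoped RealInnerProductSpace

/-- Krylov subspace `K_k(M, v) = span {v, M v, …, M^(k-1) v}`. -/
noncomputable def Krylov {n : ℕ} (M : Matrix (Fin n) (Fin n) ℝ)
    (v : EuclideanSpace ℝ (Fin n)) (k : ℕ) : Submodule ℝ (EuclideanSpace ℝ (Fin n)) :=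
  Submodule.span ℝ (Set.range fun i : Fin k => mulV (M ^ (i : ℕ)) v)

section Aux
open Matrix

variable {n : ℕ} (M N : Matrix (Fin n) (Fin n) ℝ) (u v : EuclideanSpace ℝ (Fin n))

lemma mulV_add : mulV M (u + v) = mulV M u + mulV M v := map_add _ _ _
lemma mulV_sub : mulV M (u - v) = mulV M u - mulV M v := map_sub _ _ _
lemma mulV_neg : mulV M (-v) = -(mulV M v) := map_neg _ _
lemma mulV_zero : mulV M (0 : EuclideanSpace ℝ (Fin n)) = 0 := map_zero _
lemma mulV_smul (c : ℝ) : mulV M (c • v) = c • mulV M v := map_smul _ _ _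
lemma mulV_mulV : mulV M (mulV N v) = mulV (M * N) v := by
  simp [mulV, Matrix.toEuclideanLin_eq_toLin, Matrix.toLin_mul (PiLp.basisFun 2 ℝ (Fin n)) (PiLp.basisFun 2 ℝ (Fin n)) (PiLp.basisFun 2 ℝ (Fin n)),
    LinearMap.comp_apply]
lemma mulV_one : mulV (1 : Matrix (Fin n) (Fin n) ℝ) v = v := by
  simp [mulV, Matrix.toEuclideanLin_eq_toLin]
lemma mulV_smul_mat (c : ℝ) : mulV (c • M) v = c • mulV M v := by
  simp [mulV]
lemma mulV_add_mat : mulV (M + N) v = mulV M v + mulV N v := by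
  simp [mulV]
lemma mulV_neg_mat : mulV (-M) v = -(mulV M v) := by
  simp [mulV]

lemma inner_mulV : ⟪mulV M u, v⟫ = ⟪u, mulV Mᵀ v⟫ := by
  have h := Matrix.toEuclideanLin_conjTranspose_eq_adjoint M
  have hct : Mᴴ = Mᵀ := Matrix.conjTranspose_eq_transpose_of_trivial M
  rw [hct] at h
  show ⟪Matrix.toEuclideanLin M u, v⟫ = ⟪u, Matrix.toEuclideanLin Mᵀ v⟫
  rw [h, LinearMap.adjoint_inner_right]

end Aux
section Kry
open Matrix

variable {n : ℕ} (M : Matrix (Fin n) (Fin n) ℝ) (v : EuclideanSpace ℝ (Fin n))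

lemma Krylov_zero : Krylov M v 0 = ⊥ := by
  simp [Krylov]

lemma Krylov_mono {j k : ℕ} (h : j ≤ k) : Krylov M v j ≤ Krylov M v k := by
  apply Submodule.span_mono
  rintro _ ⟨i, rfl⟩
  exact ⟨⟨i.1, lt_of_lt_of_le i.2 h⟩, rfl⟩

lemma Krylov_succ (k : ℕ) :
    Krylov M v (k + 1) = Krylov M v k ⊔ (Submodule.span ℝ {mulV (M ^ k) v}) := by
  apply le_antisymm
  · apply Submodule.span_le.2
    rintro _ ⟨i, rfl⟩
    rcases lt_or_eq_of_le (Nat.lt_succ_iff.mp i.2) with h | h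
    · exact Submodule.mem_sup_left (Submodule.subset_span ⟨⟨i.1, h⟩, rfl⟩)
    · show mulV (M ^ (i:ℕ)) v ∈ _
      rw [h]
      exact Submodule.mem_sup_right (Submodule.subset_span rfl)
  · apply sup_le (Krylov_mono M v (Nat.le_succ k))
    rw [Submodule.span_singleton_le_iff_mem]
    exact Submodule.subset_span ⟨⟨k, Nat.lt_succ_self k⟩, rfl⟩

lemma mem_Krylov_self {k : ℕ} (hk : 0 < k) : v ∈ Krylov M v k := by
  have : mulV (M ^ (0:ℕ)) v ∈ Krylov M v k := Submodule.subset_span ⟨⟨0, hk⟩, rfl⟩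
  simpa [pow_zero, mulV_one] using this

lemma Krylov_map (k : ℕ) :
    (Krylov M v k).map (Matrix.toEuclideanLin M) ≤ Krylov M v (k + 1) := by
  rw [Krylov, Submodule.map_span, Submodule.span_le]
  rintro _ ⟨_, ⟨i, rfl⟩, rfl⟩
  apply Submodule.subset_span
  exact ⟨⟨i.1 + 1, by omega⟩, by
    show mulV (M ^ ((i:ℕ)+1)) v = Matrix.toEuclideanLin M (mulV (M ^ (i:ℕ)) v)
    rw [show Matrix.toEuclideanLin M (mulV (M ^ (i:ℕ)) v) = mulV M (mulV (M ^ (i:ℕ)) v) from rfl,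
      mulV_mulV, pow_succ']⟩

lemma mulV_mem_Krylov {w : EuclideanSpace ℝ (Fin n)} {k : ℕ} (hw : w ∈ Krylov M v k) :
    mulV M w ∈ Krylov M v (k + 1) :=
  Krylov_map M v k ⟨w, hw, rfl⟩

end Kry

section Helpers
open Matrix
variable {E : Type*} [NormedAddCommGroup E] [InnerProductSpace ℝ E]

lemma sup_singleton_swap {p : Submodule ℝ E} {v u : E}
    (hu : u ∈ p ⊔ Submodule.span ℝ {v}) (hu' : u ∉ p) :
    p ⊔ Submodule.span ℝ {v} = p ⊔ Submodule.span ℝ {u} := by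
  obtain ⟨xp, hxp, y, hy, rfl⟩ := Submodule.mem_sup.mp hu
  obtain ⟨c, rfl⟩ := Submodule.mem_span_singleton.mp hy
  have hc : c ≠ 0 := by
    rintro rfl
    simp only [zero_smul, add_zero] at hu'
    exact hu' hxp
  apply le_antisymm
  · apply sup_le le_sup_left
    rw [Submodule.span_singleton_le_iff_mem]
    have hv : c⁻¹ • ((xp + c • v) - xp) ∈ p ⊔ Submodule.span ℝ {xp + c • v} :=
      Submodule.smul_mem _ _ (Submodule.sub_mem _
        (Submodule.mem_sup_right (Submodule.mem_span_singleton_self _))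
        (Submodule.mem_sup_left hxp))
    simpa [add_sub_cancel_left, smul_smul, inv_mul_cancel₀ hc] using hv
  · apply sup_le le_sup_left
    rw [Submodule.span_singleton_le_iff_mem]
    exact Submodule.add_mem _ (Submodule.mem_sup_left hxp)
      (Submodule.mem_sup_right (Submodule.smul_mem _ _ (Submodule.mem_span_singleton_self _)))

lemma inner_eq_zero_of_min {r w : E} (h : ∀ t : ℝ, ‖r‖ ≤ ‖r + t • w‖) :
    ⟪r, w⟫ = 0 := by
  by_cases hw : w = 0
  · simp [hw]
  have hd : 0 < ‖w‖ ^ 2 := pow_pos (norm_pos_iff.mpr hw) 2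
  by_contra hc0
  have key : ∀ t : ℝ, 0 ≤ 2 * (t * ⟪r, w⟫) + t ^ 2 * ‖w‖ ^ 2 := by
    intro t
    have h1 : ‖r‖ ^ 2 ≤ ‖r + t • w‖ ^ 2 := by
      have := h t
      nlinarith [norm_nonneg r, norm_nonneg (r + t • w)]
    rw [norm_add_sq_real, real_inner_smul_right, norm_smul, mul_pow, Real.norm_eq_abs,
      sq_abs] at h1
    linarith
  have h2 := key (-(⟪r, w⟫ / ‖w‖ ^ 2))
  have h3 : 2 * (-(⟪r, w⟫ / ‖w‖ ^ 2) * ⟪r, w⟫) + (-(⟪r, w⟫ / ‖w‖ ^ 2)) ^ 2 * ‖w‖ ^ 2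
      = -(⟪r, w⟫ ^ 2 / ‖w‖ ^ 2) := by
    field_simp
    ring
  rw [h3] at h2
  have h4 : 0 < ⟪r, w⟫ ^ 2 / ‖w‖ ^ 2 := div_pos (by positivity) hd
  linarith

lemma norm_le_of_inner_zero {r s : E} (h : ⟪r, s⟫ = 0) : ‖r‖ ≤ ‖r + s‖ := by
  have h1 : ‖r + s‖ ^ 2 = ‖r‖ ^ 2 + ‖s‖ ^ 2 := by
    rw [norm_add_sq_real, h]; ring
  nlinarith [norm_nonneg r, norm_nonneg (r + s), sq_nonneg ‖s‖]

lemma half_sum_aux {M : Type*} [AddCommGroup M] [Module ℝ M] (u v w : M) :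
    (1/2 : ℝ) • ((w + u) + (w + v)) = w + (1/2 : ℝ) • (u + v) := by
  match_scalars <;> norm_num

lemma eq_of_min_norm {u v : E} {mn : ℝ} (hu : ‖u‖ = mn) (hv : ‖v‖ = mn)
    (hmid : mn ≤ ‖(1/2 : ℝ) • (u + v)‖) : u = v := by
  have hmn : 0 ≤ mn := hu ▸ norm_nonneg u
  have hpar := parallelogram_law_with_norm ℝ u v
  have h2 : ‖(1/2 : ℝ) • (u + v)‖ = (1/2) * ‖u + v‖ := by
    rw [norm_smul]; simp
  have h3 : 2 * mn ≤ ‖u + v‖ := by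
    rw [h2] at hmid; linarith
  have h4 : ‖u - v‖ ^ 2 ≤ 0 := by nlinarith [norm_nonneg (u + v)]
  have h5 : ‖u - v‖ = 0 := by nlinarith [norm_nonneg (u - v)]
  exact norm_sub_eq_zero_iff.mp h5
end Helpers
open Matrix in
/-- windowed NGMRES(m) equals right-preconditioned GMRES when AP is
symmetric or a real shift of a skew-symmetric matrix. -/
theorem stmt_10 {n : ℕ} (A P : Matrix (Fin n) (Fin n) ℝ)
    (hA : IsUnit A.det) (hP : IsUnit P.det)
    (hsym : (A * P)ᵀ = A * P ∨
      ∃ (τ : ℝ) (S : Matrix (Fin n) (Fin n) ℝ), Sᵀ = -S ∧ A * P = τ • (1 : Matrix (Fin n) (Fin n) ℝ) + S)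
    (b : EuclideanSpace ℝ (Fin n))
    (q : EuclideanSpace ℝ (Fin n) → EuclideanSpace ℝ (Fin n))
    (hq : ∀ y, q y = y + mulV P (b - mulV A y))
    (m : ℕ) (hm : 0 < m)
    (x xG : ℕ → EuclideanSpace ℝ (Fin n))
    (rb0 : EuclideanSpace ℝ (Fin n)) (hrb0 : rb0 = mulV A (x 0) - b)
    -- NGMRES(m) sequence
    (β : ℕ → ℕ → ℝ)
    (hstep : ∀ k, x (k + 1) =
      q (x k) + ∑ i ∈ Finset.range (min k m + 1), β k i • (q (x k) - x (k - i)))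
    (hopt : ∀ k, ∀ c : ℕ → ℝ,
      ‖mulV A (x (k + 1)) - b‖ ≤
      ‖mulV A (q (x k) + ∑ i ∈ Finset.range (min k m + 1), c i • (q (x k) - x (k - i))) - b‖)
    -- right-preconditioned GMRES sequence
    (hG0 : xG 0 = x 0)
    (hGmem : ∀ k, ∃ z ∈ Krylov (A * P) rb0 k, xG k = x 0 + mulV P z)
    (hGopt : ∀ k, ∀ z ∈ Krylov (A * P) rb0 k,
      ‖mulV A (xG k) - b‖ ≤ ‖mulV A (x 0 + mulV P z) - b‖)
    (kstar : ℕ) (hkstar : 0 < kstar)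
    (hne : mulV A (xG (kstar - 1)) - b ≠ 0)
    (hdec : ∀ k, 0 < k → k < kstar →
      ‖mulV A (xG k) - b‖ < ‖mulV A (xG (k - 1)) - b‖) :
    ∀ k ≤ kstar, x k = xG k := by
  classical
  -- inverses and injectivity
  have hAinj : ∀ u v, mulV A u = mulV A v → u = v := by
    intro u v huv
    have h2 := congrArg (mulV A⁻¹) huv
    rwa [mulV_mulV, mulV_mulV, Matrix.nonsing_inv_mul A hA, mulV_one, mulV_one] at h2
  have hMdet : IsUnit (A * P).det := by
    rw [Matrix.det_mul]; exact hA.mul hP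
  -- Krylov shorthand
  set K : ℕ → Submodule ℝ (EuclideanSpace ℝ (Fin n)) := Krylov (A * P) rb0 with hK
  -- GMRES coordinates
  choose z hz hxz using hGmem
  have hz0 : z 0 = 0 := by
    have h0 := hz 0
    rw [hK, Krylov_zero] at h0
    simpa using h0
  -- residuals
  set r : ℕ → EuclideanSpace ℝ (Fin n) := fun j => rb0 + mulV (A * P) (z j) with hrdef
  have hr : ∀ j, r j = rb0 + mulV (A * P) (z j) := fun j => rfl
  clear_value r
  have hresy : ∀ w, mulV A (x 0 + mulV P w) - b = rb0 + mulV (A * P) w := by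
    intro w
    rw [mulV_add, mulV_mulV, hrb0]
    abel
  have hres : ∀ j, mulV A (xG j) - b = r j := by
    intro j
    rw [hxz j, hresy, hr]
  have hr0 : r 0 = rb0 := by rw [hr, hz0, mulV_zero, add_zero]
  -- minimality of GMRES residual
  have hmin : ∀ k, ∀ w ∈ K k, ‖r k‖ ≤ ‖rb0 + mulV (A * P) w‖ := by
    intro k w hw
    have h1 := hGopt k w hw
    rwa [hres k, hresy w] at h1
  -- orthogonality of the residual
  have horth : ∀ k, ∀ w ∈ K k, ⟪r k, mulV (A * P) w⟫ = 0 := by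
    intro k w hw
    apply inner_eq_zero_of_min
    intro t
    have h1 := hmin k (z k + t • w) (Submodule.add_mem _ (hz k) (Submodule.smul_mem _ _ hw))
    have e : rb0 + mulV (A * P) (z k + t • w) = r k + t • mulV (A * P) w := by
      rw [mulV_add, mulV_smul, hr]; abel
    rwa [e] at h1
  -- transpose trick
  have hMM : ∀ j (u : EuclideanSpace ℝ (Fin n)), u ∈ K j → mulV (A*P) u ∈ K j →
      ∀ v, (∀ w ∈ K j, ⟪v, mulV (A * P) w⟫ = 0) →
      ⟪mulV (A * P) v, mulV (A * P) u⟫ = 0 := by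
    intro j u hu hMu v hv
    rw [inner_mulV]
    rcases hsym with hs | ⟨τ, S, hS, hMs⟩
    · rw [hs]
      exact hv _ hMu
    · have hT : (A * P)ᵀ = (2 * τ) • (1 : Matrix (Fin n) (Fin n) ℝ) - (A * P) := by
        rw [hMs, Matrix.transpose_add, Matrix.transpose_smul, Matrix.transpose_one, hS]
        module
      rw [hT]
      have : mulV ((2 * τ) • (1 : Matrix (Fin n) (Fin n) ℝ) - (A * P)) (mulV (A * P) u)
          = (2 * τ) • mulV (A * P) u - mulV (A * P) (mulV (A * P) u) := by
        rw [sub_eq_add_neg, mulV_add_mat, mulV_neg_mat, mulV_smul_mat, mulV_one]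
        abel
      rw [this, inner_sub_right, real_inner_smul_right, hv u hu, hv _ hMu]
      ring
  -- nonvanishing of residuals before kstar
  have hrne : ∀ j, j < kstar → r j ≠ 0 := by
    intro j hj h0
    have h1 : ‖r (kstar - 1)‖ ≤ ‖rb0 + mulV (A * P) (z j)‖ :=
      hmin (kstar - 1) (z j) (Krylov_mono _ _ (by omega) (hz j))
    rw [← hr j, h0, norm_zero] at h1
    have h2 : r (kstar - 1) ≠ 0 := by rw [← hres]; exact hne
    exact h2 (norm_le_zero_iff.mp h1)
  -- Krylov growth
  have hKgrow : ∀ j, j < kstar → mulV ((A * P) ^ j) rb0 ∉ K j := by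
    intro j hj hmem
    rcases Nat.eq_zero_or_pos j with rfl | hjpos
    · rw [hK, Krylov_zero] at hmem
      rw [pow_zero, mulV_one, Submodule.mem_bot] at hmem
      exact hrne 0 hkstar (by rw [hr0, hmem])
    · have hKsub : (K j).map (Matrix.toEuclideanLin (A * P)) ≤ K j := by
        have h1 := Krylov_map (A * P) rb0 j
        have h2 : K (j + 1) = K j := by
          rw [hK, Krylov_succ]
          exact sup_eq_left.mpr ((Submodule.span_singleton_le_iff_mem _ _).mpr hmem)
        exact h1.trans h2.le
      let e : EuclideanSpace ℝ (Fin n) ≃ₗ[ℝ] EuclideanSpace ℝ (Fin n) :=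
        LinearEquiv.ofLinear (Matrix.toEuclideanLin (A * P)) (Matrix.toEuclideanLin (A * P)⁻¹)
          (LinearMap.ext fun v => by
            show mulV (A * P) (mulV (A * P)⁻¹ v) = v
            rw [mulV_mulV, Matrix.mul_nonsing_inv _ hMdet, mulV_one])
          (LinearMap.ext fun v => by
            show mulV (A * P)⁻¹ (mulV (A * P) v) = v
            rw [mulV_mulV, Matrix.nonsing_inv_mul _ hMdet, mulV_one])
      have hfr : (K j).map (Matrix.toEuclideanLin (A * P)) = K j := by
        apply Submodule.eq_of_le_of_finrank_le hKsub
        have hre : (K j).map (Matrix.toEuclideanLin (A * P))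
            = (K j).map (e : EuclideanSpace ℝ (Fin n) →ₗ[ℝ] EuclideanSpace ℝ (Fin n)) := rfl
        rw [hre, LinearEquiv.finrank_map_eq e (K j)]
      have hrb0mem : rb0 ∈ (K j).map (Matrix.toEuclideanLin (A * P)) := by
        rw [hfr]
        exact mem_Krylov_self _ _ hjpos
      obtain ⟨w, hw, hMw⟩ := Submodule.mem_map.mp hrb0mem
      have h1 := hmin j (-w) (Submodule.neg_mem _ hw)
      have e2 : rb0 + mulV (A * P) (-w) = 0 := by
        rw [mulV_neg]
        show rb0 + -(Matrix.toEuclideanLin (A * P) w) = 0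
        rw [hMw]
        abel
      rw [e2, norm_zero] at h1
      exact hrne j hj (norm_le_zero_iff.mp h1)
  -- main step
  have Kzero : K 0 = ⊥ := Krylov_zero _ _
  have Kmono : ∀ {j k : ℕ}, j ≤ k → K j ≤ K k := fun h => Krylov_mono _ _ h
  have Ksucc : ∀ k, K (k + 1) = K k ⊔ Submodule.span ℝ {mulV ((A * P) ^ k) rb0} :=
    fun k => Krylov_succ _ _ k
  have Kself : ∀ {k : ℕ}, 0 < k → rb0 ∈ K k := fun h => mem_Krylov_self _ _ h
  have Kmap : ∀ {w : EuclideanSpace ℝ (Fin n)} {k : ℕ}, w ∈ K k → mulV (A * P) w ∈ K (k + 1) :=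
    fun hw => mulV_mem_Krylov _ _ hw
  clear_value K
  have main : ∀ k, k + 1 ≤ kstar → (∀ j, j ≤ k → x j = xG j) → x (k + 1) = xG (k + 1) := by
    intro k hk1 ihx
    have hkk : k < kstar := by omega
    set dz : EuclideanSpace ℝ (Fin n) := z k - z (k - 1) with hdz
    clear_value dz
    have hrkmem : r k ∈ K (k + 1) := by
      rw [hr]
      exact Submodule.add_mem _ (Kself (Nat.succ_pos k)) (Kmap (hz k))
    have zstep : 0 < k → z k ∉ K (k - 1) := by
      intro hkpos hzk
      have h1 := hmin (k - 1) (z k) hzk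
      have h2 := hdec k hkpos hkk
      rw [hres, hres] at h2
      rw [← hr k] at h1
      exact absurd h1 (not_le.mpr h2)
    -- Claim A : K k = K (k-1) ⊔ span {dz}
    have claimA : K k = K (k - 1) ⊔ Submodule.span ℝ {dz} := by
      rcases Nat.eq_zero_or_pos k with rfl | hkpos
      · simp [hdz, hz0, Submodule.span_zero_singleton]
      · obtain ⟨p, rfl⟩ : ∃ p, k = p + 1 := ⟨k - 1, by omega⟩
        have zstep' : z (p + 1) ∉ K p := zstep (Nat.succ_pos p)
        rw [Ksucc p]
        apply sup_singleton_swap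
        · rw [← Ksucc p, hdz]
          simp only [Nat.add_sub_cancel]
          exact Submodule.sub_mem _ (hz (p + 1)) (Kmono (Nat.le_succ p) (hz p))
        · intro hmem
          apply zstep'
          have hzz : z (p + 1) = dz + z p := by
            rw [hdz]
            simp only [Nat.add_sub_cancel]
            abel
          rw [hzz]
          exact Submodule.add_mem _ hmem (hz p)
    -- Claim B : K (k+1) = K k ⊔ span {r k}
    have claimB : K (k + 1) = K k ⊔ Submodule.span ℝ {r k} := by
      rcases Nat.eq_zero_or_pos k with rfl | hkpos
      · rw [Ksucc 0]
        congr 1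
        rw [pow_zero, mulV_one, hr0]
      · obtain ⟨p, rfl⟩ : ∃ p, k = p + 1 := ⟨k - 1, by omega⟩
        rw [Ksucc (p + 1)]
        apply sup_singleton_swap
        · rw [← Ksucc (p + 1)]
          exact hrkmem
        · intro hrk
          have hzdec : z (p + 1) ∈ K p ⊔ Submodule.span ℝ {mulV ((A * P) ^ p) rb0} := by
            rw [← Ksucc p]
            exact hz (p + 1)
          obtain ⟨y, hy, w, hw, hzw⟩ := Submodule.mem_sup.mp hzdec
          obtain ⟨cc, rfl⟩ := Submodule.mem_span_singleton.mp hw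
          by_cases hcc : cc = 0
          · apply zstep (Nat.succ_pos p)
            rw [← hzw]
            simpa [hcc] using hy
          · apply hKgrow (p + 1) hkk
            have hM1 : r (p + 1) - rb0 - mulV (A * P) y = cc • mulV ((A * P) ^ (p + 1)) rb0 := by
              rw [hr, ← hzw, mulV_add, mulV_smul, mulV_mulV, ← pow_succ']
              abel
            have hM2 : mulV ((A * P) ^ (p + 1)) rb0
                = cc⁻¹ • (r (p + 1) - rb0 - mulV (A * P) y) := by
              rw [hM1, smul_smul, inv_mul_cancel₀ hcc, one_smul]
            rw [hM2]
            apply Submodule.smul_mem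
            apply Submodule.sub_mem
            · exact Submodule.sub_mem _ hrk (Kself (Nat.succ_pos p))
            · exact Kmap hy
    -- transpose-trick orthogonality for the previous space
    have hMMw : ∀ w3, w3 ∈ K (k - 1) → ⟪mulV (A * P) (r k), mulV (A * P) w3⟫ = 0 := by
      intro w3 hw3
      rcases Nat.eq_zero_or_pos k with rfl | hkpos
      · rw [Nat.zero_sub, Kzero, Submodule.mem_bot] at hw3
        rw [hw3, mulV_zero, inner_zero_right]
      · obtain ⟨p, rfl⟩ : ∃ p, k = p + 1 := ⟨k - 1, by omega⟩
        exact hMM (p + 1) w3 (Kmono (by omega) hw3) (Kmap hw3) (r (p + 1)) (horth (p + 1))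
    -- two-dimensional local minimization
    set W2 : Submodule ℝ (EuclideanSpace ℝ (Fin n)) :=
      Submodule.span ℝ {mulV (A * P) (r k)} ⊔ Submodule.span ℝ {r k - r (k - 1)} with hW2
    set T : Submodule ℝ (EuclideanSpace ℝ (Fin n)) :=
      Submodule.span ℝ {r k} ⊔ Submodule.span ℝ {dz} with hT
    have hMdz : mulV (A * P) dz = r k - r (k - 1) := by
      rw [hdz, mulV_sub, hr, hr]
      abel
    have hW2T : W2 = T.map (Matrix.toEuclideanLin (A * P)) := by
      have e1 : (Matrix.toEuclideanLin (A * P)) (r k) = mulV (A * P) (r k) := rfl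
      have e2 : (Matrix.toEuclideanLin (A * P)) dz = r k - r (k - 1) := hMdz
      rw [hT, Submodule.map_sup, Submodule.map_span, Submodule.map_span,
        Set.image_singleton, Set.image_singleton, e1, e2]
    set pr : EuclideanSpace ℝ (Fin n) := (W2.orthogonalProjectionOnto (r k) : EuclideanSpace ℝ (Fin n)) with hpr
    have hprW2 : pr ∈ W2 := (W2.orthogonalProjectionOnto (r k)).2
    have hperp : ∀ s ∈ W2, ⟪r k - pr, s⟫ = 0 := by
      intro s hs
      exact (Submodule.mem_orthogonal' _ _).mp
        (Submodule.sub_starProjection_mem_orthogonal (K := W2) (r k)) s hs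
    clear_value pr
    obtain ⟨t, htT, hMt⟩ : ∃ t ∈ T, mulV (A * P) t = -pr := by
      have hneg : -pr ∈ W2 := Submodule.neg_mem _ hprW2
      rw [hW2T] at hneg
      exact Submodule.mem_map.mp hneg
    have hcand_res : rb0 + mulV (A * P) (z k + t) = r k - pr := by
      rw [mulV_add, hMt, hr]
      abel
    have hTK : T ≤ K (k + 1) := by
      rw [hT]
      apply sup_le
      · exact (Submodule.span_singleton_le_iff_mem _ _).mpr hrkmem
      · apply (Submodule.span_singleton_le_iff_mem _ _).mpr
        apply Kmono (Nat.le_succ k)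
        rw [claimA]
        exact Submodule.mem_sup_right (Submodule.mem_span_singleton_self _)
    clear hpr
    clear_value W2 T
    -- orthogonality of the candidate residual to M K (k+1)
    have horthC : ∀ w ∈ K (k + 1), ⟪r k - pr, mulV (A * P) w⟫ = 0 := by
      intro w hw
      rw [claimB, claimA] at hw
      obtain ⟨w1, hw1, w2, hw2, rfl⟩ := Submodule.mem_sup.mp hw
      obtain ⟨w3, hw3, w4, hw4, rfl⟩ := Submodule.mem_sup.mp hw1
      obtain ⟨c3, rfl⟩ := Submodule.mem_span_singleton.mp hw4
      obtain ⟨c2, rfl⟩ := Submodule.mem_span_singleton.mp hw2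
      rw [mulV_add, mulV_add, mulV_smul, mulV_smul, hMdz]
      rw [inner_add_right, inner_add_right, real_inner_smul_right, real_inner_smul_right]
      have t3 : ⟪r k - pr, mulV (A * P) (r k)⟫ = 0 := by
        apply hperp
        rw [hW2]
        exact Submodule.mem_sup_left (Submodule.mem_span_singleton_self _)
      have t2 : ⟪r k - pr, r k - r (k - 1)⟫ = 0 := by
        apply hperp
        rw [hW2]
        exact Submodule.mem_sup_right (Submodule.mem_span_singleton_self _)
      have t1 : ⟪r k - pr, mulV (A * P) w3⟫ = 0 := by
        rw [inner_sub_left]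
        have ha : ⟪r k, mulV (A * P) w3⟫ = 0 := horth k w3 (Kmono (Nat.sub_le k 1) hw3)
        have hb : ⟪pr, mulV (A * P) w3⟫ = 0 := by
          have hprW2' : pr ∈ Submodule.span ℝ {mulV (A * P) (r k)}
              ⊔ Submodule.span ℝ {r k - r (k - 1)} := hW2 ▸ hprW2
          obtain ⟨s1, hs1, s2, hs2, hpr2⟩ := Submodule.mem_sup.mp hprW2'
          obtain ⟨a1, rfl⟩ := Submodule.mem_span_singleton.mp hs1
          obtain ⟨a2, rfl⟩ := Submodule.mem_span_singleton.mp hs2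
          rw [← hpr2, inner_add_left, real_inner_smul_left, real_inner_smul_left]
          have hbb1 := hMMw w3 hw3
          have hbb2 : ⟪r k - r (k - 1), mulV (A * P) w3⟫ = 0 := by
            rw [inner_sub_left, horth k w3 (Kmono (Nat.sub_le k 1) hw3),
              horth (k - 1) w3 hw3]
            ring
          rw [hbb1, hbb2]
          ring
        rw [ha, hb]
        ring
      rw [t1, t2, t3]
      ring
    -- global minimality of the candidate residual
    have hglob : ∀ w ∈ K (k + 1), ‖r k - pr‖ ≤ ‖rb0 + mulV (A * P) w‖ := by
      intro w hw
      have hzkt : z k + t ∈ K (k + 1) :=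
        Submodule.add_mem _ (Kmono (Nat.le_succ k) (hz k)) (hTK htT)
      have e : rb0 + mulV (A * P) w = (r k - pr) + mulV (A * P) (w - (z k + t)) := by
        rw [← hcand_res, mulV_sub]
        abel
      rw [e]
      exact norm_le_of_inner_zero (horthC _ (Submodule.sub_mem _ hw hzkt))
    -- coefficients of t
    have htT2 : t ∈ Submodule.span ℝ {r k} ⊔ Submodule.span ℝ {dz} := hT ▸ htT
    obtain ⟨ta, hta, tb, htb, htab⟩ := Submodule.mem_sup.mp htT2
    obtain ⟨a, rfl⟩ := Submodule.mem_span_singleton.mp hta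
    obtain ⟨c, rfl⟩ := Submodule.mem_span_singleton.mp htb
    -- q at the current iterate
    have hQ : q (x k) = x 0 + mulV P (z k - r k) := by
      rw [hq, ihx k le_rfl, hxz k]
      have h1 : b - mulV A (x 0 + mulV P (z k)) = -(r k) := by
        have h2 := hresy (z k)
        rw [← hr k] at h2
        rw [← h2]
        abel
      rw [h1, mulV_neg, mulV_sub]
      abel
    -- NGMRES candidate reaching the two-dimensional minimizer
    have hxle : ‖mulV A (x (k + 1)) - b‖ ≤ ‖r k - pr‖ := by
      rcases Nat.eq_zero_or_pos k with rfl | hkpos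
      · -- k = 0 : one-term window
        set cand : ℕ → ℝ := fun i => if i = 0 then -(1 + a) else 0 with hcdef
        have hcand := hopt 0 cand
        have hdz0 : dz = 0 := by rw [hdz, hz0]; simp
        have hy0 : q (x 0) + ∑ i ∈ Finset.range (min 0 m + 1), cand i • (q (x 0) - x (0 - i))
            = x 0 + mulV P (z 0 + (a • r 0 + c • dz)) := by
          rw [show min 0 m = 0 from min_eq_left (Nat.zero_le m), Finset.sum_range_one, hQ]
          simp only [hcdef, if_pos rfl, Nat.sub_zero, hdz0, hz0, hr0, smul_zero, add_zero]
          simp only [mulV_sub, mulV_add, mulV_smul, mulV_zero]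
          module
        rw [hy0, htab, hresy, hcand_res] at hcand
        exact hcand
      · -- k ≥ 1 : two-term window
        obtain ⟨p, rfl⟩ : ∃ p, k = p + 1 := ⟨k - 1, by omega⟩
        set cand : ℕ → ℝ := fun i => if i = 0 then (-(1 + a) - c) else if i = 1 then c else 0
          with hcdef
        have hcand := hopt (p + 1) cand
        have hsub : ({0, 1} : Finset ℕ) ⊆ Finset.range (min (p + 1) m + 1) := by
          intro i hi
          simp only [Finset.mem_insert, Finset.mem_singleton] at hi
          rcases hi with rfl | rfl <;> simp only [Finset.mem_range] <;> omega
        have hzero : ∀ i ∈ Finset.range (min (p + 1) m + 1), i ∉ ({0, 1} : Finset ℕ) →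
            cand i • (q (x (p + 1)) - x (p + 1 - i)) = 0 := by
          intro i _ hi
          simp only [Finset.mem_insert, Finset.mem_singleton, not_or] at hi
          simp only [hcdef, if_neg hi.1, if_neg hi.2, zero_smul]
        have hsum : ∑ i ∈ Finset.range (min (p + 1) m + 1),
              cand i • (q (x (p + 1)) - x (p + 1 - i))
            = (-(1 + a) - c) • (q (x (p + 1)) - x (p + 1)) + c • (q (x (p + 1)) - x p) := by
          rw [← Finset.sum_subset hsub hzero,
            show ({0, 1} : Finset ℕ) = insert 0 {1} from rfl,
            Finset.sum_insert (by simp), Finset.sum_singleton]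
          simp only [hcdef, Nat.sub_zero, Nat.add_sub_cancel]
          norm_num
        have hy0 : q (x (p + 1)) + ∑ i ∈ Finset.range (min (p + 1) m + 1),
              cand i • (q (x (p + 1)) - x (p + 1 - i))
            = x 0 + mulV P (z (p + 1) + (a • r (p + 1) + c • dz)) := by
          rw [hsum, hQ, ihx (p + 1) le_rfl, hxz (p + 1), ihx p (by omega), hxz p, hdz]
          simp only [Nat.add_sub_cancel]
          simp only [mulV_sub, mulV_add, mulV_smul]
          module
        rw [hy0, htab, hresy, hcand_res] at hcand
        exact hcand
    -- x (k+1) lies in the Krylov affine space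
    set ζ : EuclideanSpace ℝ (Fin n) :=
      (z k - r k) + ∑ i ∈ Finset.range (min k m + 1), β k i • ((z k - r k) - z (k - i)) with hζ
    have hζK : ζ ∈ K (k + 1) := by
      apply Submodule.add_mem
      · exact Submodule.sub_mem _ (Kmono (Nat.le_succ k) (hz k)) hrkmem
      · apply Submodule.sum_mem
        intro i hi
        apply Submodule.smul_mem
        apply Submodule.sub_mem
        · exact Submodule.sub_mem _ (Kmono (Nat.le_succ k) (hz k)) hrkmem
        · exact Kmono (by omega) (hz (k - i))
    have hxk1 : x (k + 1) = x 0 + mulV P ζ := by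
      rw [hstep k, hζ]
      have hterm : ∀ i ∈ Finset.range (min k m + 1),
          β k i • (q (x k) - x (k - i)) = β k i • (mulV P ((z k - r k) - z (k - i))) := by
        intro i hi
        rw [hQ, ihx (k - i) (by omega), hxz (k - i)]
        simp only [mulV_sub]
        module
      rw [Finset.sum_congr rfl hterm, hQ]
      have hPsum : mulV P ((z k - r k) + ∑ i ∈ Finset.range (min k m + 1),
            β k i • ((z k - r k) - z (k - i)))
          = mulV P (z k - r k) + ∑ i ∈ Finset.range (min k m + 1),
            β k i • mulV P ((z k - r k) - z (k - i)) := by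
        show Matrix.toEuclideanLin P _ = _
        rw [map_add, map_sum]
        simp only [_root_.map_smul]
        rfl
      rw [hPsum]
      abel
    clear_value ζ
    have hge : ‖r (k + 1)‖ ≤ ‖mulV A (x (k + 1)) - b‖ := by
      have h3 := hGopt (k + 1) ζ hζK
      rw [hres (k + 1), ← hxk1] at h3
      exact h3
    have h2 : ‖r k - pr‖ ≤ ‖r (k + 1)‖ := by
      have := hglob (z (k + 1)) (hz (k + 1))
      rw [← hr (k + 1)] at this
      exact this
    have hu : ‖mulV A (x (k + 1)) - b‖ = ‖r (k + 1)‖ := le_antisymm (hxle.trans h2) hge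
    have hv : ‖mulV A (xG (k + 1)) - b‖ = ‖r (k + 1)‖ := congrArg norm (hres (k + 1))
    have humid : mulV A (x (k + 1)) - b = rb0 + mulV (A * P) ζ := by rw [hxk1, hresy]
    have hvv : mulV A (xG (k + 1)) - b = rb0 + mulV (A * P) (z (k + 1)) := by
      rw [hres, hr]
    have hmidmem : (1/2 : ℝ) • (ζ + z (k + 1)) ∈ K (k + 1) :=
      Submodule.smul_mem _ _ (Submodule.add_mem _ hζK (hz (k + 1)))
    have hmide : (1/2 : ℝ) • ((rb0 + mulV (A * P) ζ) + (rb0 + mulV (A * P) (z (k + 1))))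
        = rb0 + mulV (A * P) ((1/2 : ℝ) • (ζ + z (k + 1))) := by
      rw [mulV_smul, mulV_add]
      exact half_sum_aux (mulV (A * P) ζ) (mulV (A * P) (z (k + 1))) rb0
    have hmid : ‖r (k + 1)‖ ≤
        ‖(1/2 : ℝ) • ((mulV A (x (k + 1)) - b) + (mulV A (xG (k + 1)) - b))‖ := by
      rw [humid, hvv, hmide]
      exact hmin (k + 1) _ hmidmem
    have hfin := eq_of_min_norm hu hv hmid
    apply hAinj
    exact sub_left_inj.mp hfin
  -- conclude by strong induction
  have all : ∀ k, k ≤ kstar → ∀ j, j ≤ k → x j = xG j := by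
    intro k
    induction k with
    | zero =>
      intro _ j hj
      interval_cases j
      exact hG0.symm
    | succ k ih =>
      intro hk j hj
      by_cases h : j ≤ k
      · exact ih (by omega) j h
      · have hj1 : j = k + 1 := by omega
        subst hj1
        exact main k hk (ih (by omega))
  exact fun k hk => all k hk k le_rfl
end
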